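/- Killer confounder boundary: Fix c > 0 and a threshold level b > 0. The set of pairs (ρ, R²) ∈ (0,1]×[0,1) with ρ·c·sqrt(R²/(1−R²)) ≥ b is exactly the set of pairs with R² ≥ b²/(b² + ρ²c²). In particular, along the diagonal ρ² = R² = t the inequality becomes t²/(1−t) ≥ b²/c², whose boundary solution in (0,1) is the robustness value t = (1/2)(sqrt(a²+4a) − a) with a = b²/c². -/

import Mathlib

theorem killer_confounder_boundary (c b : ℝ) (hc : 0 < c) (hb : 0 < b) :
    ({p : ℝ × ℝ | p.1 ∈ Set.Ioc (0 : ℝ) 1 ∧ p.2 ∈ Set.Ico (0 : ℝ) 1 ∧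
        b ≤ p.1 * c * Real.sqrt (p.2 / (1 - p.2))}
      = {p : ℝ × ℝ | p.1 ∈ Set.Ioc (0 : ℝ) 1 ∧ p.2 ∈ Set.Ico (0 : ℝ) 1 ∧
        b ^ 2 / (b ^ 2 + p.1 ^ 2 * c ^ 2) ≤ p.2}) ∧
    (∀ t ∈ Set.Ioo (0 : ℝ) 1,
      (b ≤ Real.sqrt t * c * Real.sqrt (t / (1 - t)) ↔
        b ^ 2 / c ^ 2 ≤ t ^ 2 / (1 - t))) ∧
    (let a := b ^ 2 / c ^ 2
     let RV := (1 / 2) * (Real.sqrt (a ^ 2 + 4 * a) - a)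
     RV ∈ Set.Ioo (0 : ℝ) 1 ∧ RV ^ 2 / (1 - RV) = a) := by
  refine ⟨?_, ?_, ?_⟩
  · ext ⟨ρ, x⟩
    simp only [Set.mem_setOf_eq, Set.mem_Ioc, Set.mem_Ico]
    constructor
    · rintro ⟨hρ, hx, h⟩
      refine ⟨hρ, hx, ?_⟩
      have hs : 0 < 1 - x := by linarith [hx.2]
      have hu : 0 ≤ x / (1 - x) := div_nonneg hx.1 hs.le
      have hsq : (Real.sqrt (x / (1 - x))) ^ 2 = x / (1 - x) := Real.sq_sqrt hu
      have h2 : b ^ 2 ≤ ρ ^ 2 * c ^ 2 * (x / (1 - x)) := by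
        have h1 := mul_le_mul h h hb.le (hb.le.trans h)
        have e : ρ * c * Real.sqrt (x / (1 - x)) * (ρ * c * Real.sqrt (x / (1 - x)))
            = ρ ^ 2 * c ^ 2 * (x / (1 - x)) := by
          rw [show ρ * c * Real.sqrt (x / (1 - x)) * (ρ * c * Real.sqrt (x / (1 - x)))
              = ρ ^ 2 * c ^ 2 * Real.sqrt (x / (1 - x)) ^ 2 from by ring, hsq]
        nlinarith [h1, e]
      have h3 : b ^ 2 * (1 - x) ≤ ρ ^ 2 * c ^ 2 * x := by
        have := mul_le_mul_of_nonneg_right h2 hs.le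
        rwa [mul_assoc, div_mul_cancel₀ _ hs.ne'] at this
      rw [div_le_iff₀ (by positivity)]
      nlinarith
    · rintro ⟨hρ, hx, h⟩
      refine ⟨hρ, hx, ?_⟩
      have hs : 0 < 1 - x := by linarith [hx.2]
      have hu : 0 ≤ x / (1 - x) := div_nonneg hx.1 hs.le
      have hsq : (Real.sqrt (x / (1 - x))) ^ 2 = x / (1 - x) := Real.sq_sqrt hu
      rw [div_le_iff₀ (by positivity)] at h
      have h3 : b ^ 2 * (1 - x) ≤ ρ ^ 2 * c ^ 2 * x := by nlinarith
      have hA : 0 ≤ ρ * c * Real.sqrt (x / (1 - x)) :=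
        mul_nonneg (mul_nonneg hρ.1.le hc.le) (Real.sqrt_nonneg _)
      have hA2 : b ^ 2 ≤ (ρ * c * Real.sqrt (x / (1 - x))) ^ 2 := by
        have : (ρ * c * Real.sqrt (x / (1 - x))) ^ 2 = ρ ^ 2 * c ^ 2 * (x / (1 - x)) := by
          rw [mul_pow, mul_pow, hsq]
        rw [this, ← mul_div_assoc, le_div_iff₀ hs]
        nlinarith
      calc b = Real.sqrt (b ^ 2) := (Real.sqrt_sq hb.le).symm
        _ ≤ Real.sqrt ((ρ * c * Real.sqrt (x / (1 - x))) ^ 2) := Real.sqrt_le_sqrt hA2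
        _ = _ := Real.sqrt_sq hA
  · rintro t ⟨ht0, ht1⟩
    have hs : 0 < 1 - t := by linarith
    have hu : 0 ≤ t / (1 - t) := div_nonneg ht0.le hs.le
    have hsq : (Real.sqrt (t / (1 - t))) ^ 2 = t / (1 - t) := Real.sq_sqrt hu
    have hsqt : (Real.sqrt t) ^ 2 = t := Real.sq_sqrt ht0.le
    have hA : 0 ≤ Real.sqrt t * c * Real.sqrt (t / (1 - t)) := by
      have := Real.sqrt_nonneg (t / (1 - t)); have := Real.sqrt_nonneg t; positivity
    have hAsq : (Real.sqrt t * c * Real.sqrt (t / (1 - t))) ^ 2 = c ^ 2 * (t ^ 2 / (1 - t)) := by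
      rw [mul_pow, mul_pow, hsq, hsqt]
      field_simp
    constructor
    · intro h
      have h2 : b ^ 2 ≤ c ^ 2 * (t ^ 2 / (1 - t)) := by
        rw [← hAsq]; nlinarith
      rw [div_le_iff₀ (by positivity)]
      linarith [h2]
    · intro h
      have h2 : b ^ 2 ≤ c ^ 2 * (t ^ 2 / (1 - t)) := by
        rw [div_le_iff₀ (by positivity)] at h
        linarith
      calc b = Real.sqrt (b ^ 2) := (Real.sqrt_sq hb.le).symm
        _ ≤ Real.sqrt ((Real.sqrt t * c * Real.sqrt (t / (1 - t))) ^ 2) := by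
            apply Real.sqrt_le_sqrt; rw [hAsq]; exact h2
        _ = _ := Real.sqrt_sq hA
  · intro a RV
    have ha : 0 < a := by positivity
    have hsn : 0 ≤ a ^ 2 + 4 * a := by nlinarith
    set s := Real.sqrt (a ^ 2 + 4 * a) with hsdef
    have hs2 : s ^ 2 = a ^ 2 + 4 * a := Real.sq_sqrt hsn
    have hs0 : 0 ≤ s := Real.sqrt_nonneg _
    have hsa : a < s := by nlinarith
    have hsb : s < a + 2 := by nlinarith
    have hRV : RV = (1 / 2) * (s - a) := rfl
    constructor
    · constructor
      · rw [hRV]; nlinarith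
      · rw [hRV]; nlinarith
    · rw [hRV, div_eq_iff (by nlinarith)]
      nlinarith
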